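/- (Crypto lemma, independence form.) If Y is any ℝⁿ-valued random vector and U is uniformly distributed over the fundamental domain F and independent of Y, then fract_b(Y + U), i.e. (Y + U) mod Λ, is uniformly distributed over F and independent of Y. (This justifies that the dithered quantization error E_q := (α₁(X+Z₁) + U) mod Λ_q is uniform over the quantizer's Voronoi region and independent of everything else.) -/

import Mathlib

open MeasureTheory ProbabilityTheory Pointwise

private theorem zspan_fract_measurable (n : ℕ) (b : Module.Basis (Fin n) ℝ (Fin n → ℝ)) :
    Measurable (ZSpan.fract b) := by
  have h : ZSpan.fract b = fun m => m - ∑ i, (⌊b.repr m i⌋ : ℝ) • b i := by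
    funext m
    rw [ZSpan.fract_apply]
    congr 1
    rw [ZSpan.floor, Submodule.coe_sum]
    congr 1; funext i
    rw [Submodule.coe_smul, Module.Basis.restrictScalars_apply, Int.cast_smul_eq_zsmul ℝ]
  rw [h]
  refine measurable_id.sub (Finset.measurable_sum _ fun i _ => ?_)
  have hrep : Measurable fun m : Fin n → ℝ => b.repr m i := by
    have := (LinearMap.continuous_of_finiteDimensional (b.coord i)).measurable
    convert this using 1; funext m; exact (Module.Basis.coord_apply b i m).symm
  exact ((measurable_of_countable (fun z : ℤ => (z : ℝ))).comp hrep.floor).smul_const (b i)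

private theorem zspan_fract_add_map_restrict (n : ℕ) (b : Module.Basis (Fin n) ℝ (Fin n → ℝ))
    (y : Fin n → ℝ) :
    Measure.map (fun u => ZSpan.fract b (y + u))
        (volume.restrict (ZSpan.fundamentalDomain b))
      = volume.restrict (ZSpan.fundamentalDomain b) := by
  have hfm : Measurable (ZSpan.fract b) := zspan_fract_measurable n b
  set F := ZSpan.fundamentalDomain b with hF
  set L := Submodule.span ℤ (Set.range ⇑b) with hL
  have hFmeas : MeasurableSet F := ZSpan.fundamentalDomain_measurableSet b
  have hFD : IsAddFundamentalDomain L F volume := ZSpan.isAddFundamentalDomain b volume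
  haveI : VAddCommClass (Fin n → ℝ) (↥L) (Fin n → ℝ) :=
    ⟨fun a g x => by simp only [vadd_eq_add, Submodule.vadd_def, add_left_comm]⟩
  haveI : MeasurableVAdd (↥L) (Fin n → ℝ) := by
    refine { measurable_const_vadd := fun c => ?_, measurable_vadd_const := fun x => ?_ }
    · simpa [Submodule.vadd_def, vadd_eq_add] using measurable_const_add (c : Fin n → ℝ)
    · exact measurable_of_countable _
  haveI : VAddInvariantMeasure (↥L) (Fin n → ℝ) volume :=
    ⟨fun g s hs => by
      simpa [Submodule.vadd_def, vadd_eq_add] using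
        measure_preimage_add volume (g : Fin n → ℝ) s⟩
  have hFD' : IsAddFundamentalDomain L (y +ᵥ F) volume := hFD.vadd_of_comm y
  have hT : Measurable fun u => ZSpan.fract b (y + u) := hfm.comp (measurable_const_add y)
  ext s hs
  rw [Measure.map_apply hT hs, Measure.restrict_apply (hT hs), Measure.restrict_apply hs]
  have hA : MeasurableSet (ZSpan.fract b ⁻¹' s) := hfm hs
  have h1 : (fun u => ZSpan.fract b (y + u)) ⁻¹' s ∩ F
      = (fun u => y + u) ⁻¹' (ZSpan.fract b ⁻¹' s ∩ (y +ᵥ F)) := by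
    ext u
    simp only [Set.mem_inter_iff, Set.mem_preimage, Set.mem_vadd_set_iff_neg_vadd_mem,
      vadd_eq_add, neg_add_cancel_left]
  rw [h1, measure_preimage_add]
  have h2 : volume (ZSpan.fract b ⁻¹' s ∩ (y +ᵥ F)) = volume (ZSpan.fract b ⁻¹' s ∩ F) := by
    refine hFD'.measure_set_eq hFD hA fun g => ?_
    ext x
    simp only [Set.mem_preimage, Submodule.vadd_def, vadd_eq_add]
    rw [ZSpan.fract_zSpan_add b x g.2]
  rw [h2]
  congr 1
  ext x
  simp only [Set.mem_inter_iff, Set.mem_preimage]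
  exact ⟨fun ⟨h1, h2⟩ => ⟨by rwa [ZSpan.fract_eq_self.mpr h2] at h1, h2⟩,
    fun ⟨h1, h2⟩ => ⟨by rwa [ZSpan.fract_eq_self.mpr h2], h2⟩⟩

/-- Crypto lemma, independence form: if `Y` is any `ℝⁿ`-valued random vector and `U` is
uniformly distributed over the fundamental domain `F` of the lattice generated by a basis
`b` and independent of `Y`, then `(Y + U) mod Λ` is uniformly distributed over `F` and
independent of `Y`. -/
theorem crypto_lemma_independence (n : ℕ) (hn : 1 ≤ n)
    (b : Module.Basis (Fin n) ℝ (Fin n → ℝ))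
    {Ω : Type*} [MeasurableSpace Ω] {μ : Measure Ω} [IsProbabilityMeasure μ]
    (Y U : Ω → (Fin n → ℝ)) (hY : Measurable Y) (hU : Measurable U)
    (hUdist : Measure.map U μ
      = (volume (ZSpan.fundamentalDomain b))⁻¹ •
          volume.restrict (ZSpan.fundamentalDomain b))
    (hindep : IndepFun Y U μ) :
    Measure.map (fun ω => ZSpan.fract b (Y ω + U ω)) μ
        = (volume (ZSpan.fundamentalDomain b))⁻¹ •
            volume.restrict (ZSpan.fundamentalDomain b) ∧
    IndepFun Y (fun ω => ZSpan.fract b (Y ω + U ω)) μ := by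
  have hfm : Measurable (ZSpan.fract b) := zspan_fract_measurable n b
  have hfr : Measurable fun ω => ZSpan.fract b (Y ω + U ω) := hfm.comp (hY.add hU)
  have hpm : Measurable fun ω => (Y ω, ZSpan.fract b (Y ω + U ω)) := hY.prodMk hfr
  obtain ⟨m, hm⟩ : ∃ m, (volume (ZSpan.fundamentalDomain b))⁻¹ •
      volume.restrict (ZSpan.fundamentalDomain b) = m := ⟨_, rfl⟩
  rw [hm] at hUdist ⊢
  have hmprob : IsProbabilityMeasure m := by
    rw [← hUdist]; exact Measure.isProbabilityMeasure_map hU.aemeasurable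
  have hνprob : IsProbabilityMeasure (Measure.map Y μ) :=
    Measure.isProbabilityMeasure_map hY.aemeasurable
  -- each fiber map preserves m
  have hkey : ∀ y : Fin n → ℝ, Measure.map (fun u => ZSpan.fract b (y + u)) m = m := by
    intro y
    rw [← hm, Measure.map_smul, zspan_fract_add_map_restrict n b y]
  -- joint distribution of (Y, U)
  have hjoint : Measure.map (fun ω => (Y ω, U ω)) μ = (Measure.map Y μ).prod m := by
    rw [← hUdist]
    exact (indepFun_iff_map_prod_eq_prod_map_map hY.aemeasurable hU.aemeasurable).1 hindep
  have hgm : Measurable fun p : (Fin n → ℝ) × (Fin n → ℝ) => (p.1, ZSpan.fract b (p.1 + p.2)) :=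
    measurable_fst.prodMk (hfm.comp (measurable_fst.add measurable_snd))
  have hunc : Measurable (Function.uncurry fun a u => ZSpan.fract b (a + u)) :=
    hfm.comp (measurable_fst.add measurable_snd)
  have hskew : MeasurePreserving
      (fun p : (Fin n → ℝ) × (Fin n → ℝ) => (p.1, ZSpan.fract b (p.1 + p.2)))
      ((Measure.map Y μ).prod m) ((Measure.map Y μ).prod m) :=
    (MeasurePreserving.id (Measure.map Y μ)).skew_product
      (g := fun a u => ZSpan.fract b (a + u)) hunc (Filter.Eventually.of_forall hkey)
  have hjoint2 : Measure.map (fun ω => (Y ω, ZSpan.fract b (Y ω + U ω))) μ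
      = (Measure.map Y μ).prod m := by
    have hcomp : (fun ω => (Y ω, ZSpan.fract b (Y ω + U ω)))
        = (fun p : (Fin n → ℝ) × (Fin n → ℝ) => (p.1, ZSpan.fract b (p.1 + p.2)))
          ∘ (fun ω => (Y ω, U ω)) := rfl
    rw [hcomp, ← Measure.map_map hgm (hY.prodMk hU), hjoint, hskew.map_eq]
  have hfirst : Measure.map (fun ω => ZSpan.fract b (Y ω + U ω)) μ = m := by
    have hcomp : (fun ω => ZSpan.fract b (Y ω + U ω))
        = Prod.snd ∘ (fun ω => (Y ω, ZSpan.fract b (Y ω + U ω))) := rfl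
    rw [hcomp, ← Measure.map_map measurable_snd hpm, hjoint2, Measure.map_snd_prod,
      measure_univ, one_smul]
  refine ⟨hfirst, ?_⟩
  refine (indepFun_iff_map_prod_eq_prod_map_map hY.aemeasurable hfr.aemeasurable).2 ?_
  rw [hjoint2, hfirst]
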